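/- arXiv:0704.3313 — 2 statements merged into one kernel-verified Lean document; each statement's English description precedes it below -/
import Mathlib

section
/- Two finite multisets S and T of elements of a field K, each of size at most d, are equal if and only if their power sums agree: s_k(S) = s_k(T) for all 0 ≤ k ≤ d, where s_0 denotes cardinality (as a natural number) and K has characteristic 0 or characteristic p > d. -/
open Finset MvPolynomial Polynomial

/-- Newton's identity for multisets. -/
lemma multiset_newton {K : Type*} [CommRing K] (S : Multiset K) (k : ℕ) :
    (k : K) * S.esymm k = (-1) ^ (k + 1) *
      ∑ a ∈ (Finset.HasAntidiagonal.antidiagonal k).filter (fun a => a.1 < k),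
        (-1) ^ a.1 * S.esymm a.1 * (S.map (fun x => x ^ a.2)).sum := by
  obtain ⟨l, rfl⟩ : ∃ l : List K, ↑l = S := ⟨S.toList, S.coe_toList⟩
  have huniv : (Finset.univ.val.map l.get : Multiset K) = ↑l := by
    rw [Fin.univ_def]
    exact congrArg _ (List.map_get_finRange l)
  have h := congrArg (MvPolynomial.aeval l.get)
    (MvPolynomial.mul_esymm_eq_sum (Fin l.length) K k)
  simp only [map_mul, map_natCast, map_pow, map_neg, map_one, map_sum,
    MvPolynomial.aeval_esymm_eq_multiset_esymm, MvPolynomial.psum, MvPolynomial.aeval_X,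
    huniv] at h
  convert h using 4 with a _
  rw [← huniv, Multiset.map_map]
  rfl

/-- Two multisets of size at most `d` over a field of characteristic `0` or `p > d`
are equal iff their power sums `s_0, …, s_d` agree (with `s_0` the cardinality). -/
theorem multiset_eq_iff_power_sums_eq {K : Type*} [Field K] (d : ℕ)
    (hchar : CharZero K ∨ ∃ p : ℕ, p.Prime ∧ CharP K p ∧ d < p)
    (S T : Multiset K) (hS : Multiset.card S ≤ d) (hT : Multiset.card T ≤ d) :
    S = T ↔
      (Multiset.card S = Multiset.card T ∧
        ∀ k : ℕ, 1 ≤ k → k ≤ d →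
          (S.map (fun x => x ^ k)).sum = (T.map (fun x => x ^ k)).sum) := by
  constructor
  · rintro rfl; exact ⟨rfl, fun _ _ _ => rfl⟩
  · rintro ⟨hcard, hps⟩
    have hk0 : ∀ k : ℕ, 1 ≤ k → k ≤ d → (k : K) ≠ 0 := by
      intro k hk1 hkd
      rcases hchar with h | ⟨p, hp, hcp, hdp⟩
      · exact Nat.cast_ne_zero.mpr (by omega)
      · rw [Ne, CharP.cast_eq_zero_iff K p k]
        exact Nat.not_dvd_of_pos_of_lt (by omega) (by omega)
    have hesymm : ∀ k : ℕ, k ≤ d → S.esymm k = T.esymm k := by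
      intro k
      induction k using Nat.strong_induction_on with
      | _ k ih =>
        intro hk
        rcases Nat.eq_zero_or_pos k with rfl | hpos
        · simp [Multiset.esymm]
        · have key : (k : K) * S.esymm k = (k : K) * T.esymm k := by
            rw [multiset_newton S k, multiset_newton T k]
            congr 1
            refine Finset.sum_congr rfl fun a ha => ?_
            simp only [Finset.mem_filter, Finset.HasAntidiagonal.mem_antidiagonal] at ha
            rw [ih a.1 ha.2 (le_trans (le_of_lt ha.2) hk),
              hps a.2 (by omega) (by omega)]
          exact mul_left_cancel₀ (hk0 k hpos hk) key
    have hP : (S.map fun a => Polynomial.X - Polynomial.C a).prod = (T.map fun a => Polynomial.X - Polynomial.C a).prod := by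
      ext k
      by_cases hkS : k ≤ Multiset.card S
      · rw [Multiset.prod_X_sub_C_coeff S hkS, Multiset.prod_X_sub_C_coeff T (hcard ▸ hkS),
          hcard, hesymm _ (le_trans (Nat.sub_le _ _) (hcard ▸ hS))]
      · rw [Polynomial.coeff_eq_zero_of_natDegree_lt, Polynomial.coeff_eq_zero_of_natDegree_lt]
        · rw [Polynomial.natDegree_multiset_prod_X_sub_C_eq_card]; omega
        · rw [Polynomial.natDegree_multiset_prod_X_sub_C_eq_card]; omega
    have hroots := congrArg Polynomial.roots hP
    rwa [Polynomial.roots_multiset_prod_X_sub_C, Polynomial.roots_multiset_prod_X_sub_C] at hroots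
end

section
/- In the random multigraph model with x edges and y = c·x vertices (each edge choosing an unordered pair of distinct vertices uniformly at random and independently), the probability that the graph is not simple or contains a cycle is O(1/c²); in particular, choosing c = Θ(√(1/ε)) makes this failure probability at most ε/4. -/
open Finset

/-- The random multigraph on `y` vertices with `x` independent uniformly random
edges (an edge is an ordered pair `(u,v)` with `u < v`, modeling an unordered
pair of distinct vertices) is "bad" if it is not simple (two edges choose the
same vertex pair) or contains a cycle (a nonempty edge set in which every
vertex has degree `0` or at least `2`). -/
def BadGraph (x y : ℕ) (ω : Fin x → {p : Fin y × Fin y // p.1 < p.2}) : Prop :=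
  (∃ e e' : Fin x, e ≠ e' ∧ ω e = ω e') ∨
  (∃ F : Finset (Fin x), F.Nonempty ∧ ∀ v : Fin y,
    ((∑ e ∈ F, ((if (ω e : Fin y × Fin y).1 = v then 1 else 0) +
        (if (ω e : Fin y × Fin y).2 = v then 1 else 0))) = 0 ∨
     2 ≤ ∑ e ∈ F, ((if (ω e : Fin y × Fin y).1 = v then 1 else 0) +
        (if (ω e : Fin y × Fin y).2 = v then 1 else 0))))

open Classical in
/-- The probability, under the uniform distribution over all edge choices, that
the random multigraph is not simple or contains a cycle. -/
noncomputable def badProb (x y : ℕ) : ℝ :=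
  ((Finset.univ.filter (fun ω : Fin x → {p : Fin y × Fin y // p.1 < p.2} =>
      BadGraph x y ω)).card : ℝ)
    / ((Finset.univ : Finset (Fin x → {p : Fin y × Fin y // p.1 < p.2})).card : ℝ)

/-! ### Auxiliary material -/

abbrev PT (y : ℕ) := {p : Fin y × Fin y // p.1 < p.2}

lemma two_mul_PTcard (y : ℕ) : 2 * Fintype.card (PT y) = y * (y - 1) := by
  have e : PT y ≃ (Σ b : Fin y, Fin b.val) :=
    { toFun := fun p => ⟨p.1.2, ⟨p.1.1.val, p.2⟩⟩
      invFun := fun q => ⟨(⟨q.2.val, lt_trans q.2.isLt q.1.isLt⟩, q.1), q.2.isLt⟩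
      left_inv := fun p => rfl
      right_inv := fun q => rfl }
  rw [Fintype.card_congr e, Fintype.card_sigma]
  simp only [Fintype.card_fin]
  rw [Fin.sum_univ_eq_sum_range (fun i => i) y, mul_comm]
  exact Finset.sum_range_id_mul_two y

lemma PTcard_pos {y : ℕ} (hy : 2 ≤ y) : 0 < Fintype.card (PT y) := by
  have h := two_mul_PTcard y
  have h2 : 2 * 1 ≤ y * (y - 1) := Nat.mul_le_mul hy (by omega)
  omega

lemma sq_le_four_PTcard {y : ℕ} (hy : 2 ≤ y) : y ^ 2 ≤ 4 * Fintype.card (PT y) := by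
  have h := two_mul_PTcard y
  obtain ⟨k, rfl⟩ : ∃ k, y = k + 2 := ⟨y - 2, by omega⟩
  have h' : k + 2 - 1 = k + 1 := rfl
  rw [h'] at h
  nlinarith [h]

/-- Master counting lemma: the number of edge-choice functions satisfying a
pointwise constraint `Q` on the coordinates in `F`. -/
lemma count_forall {x y : ℕ} (F : Finset (Fin x)) (Q : PT y → Prop) [DecidablePred Q] :
    (Finset.univ.filter (fun ω : Fin x → PT y => ∀ i ∈ F, Q (ω i))).card
      = (Fintype.card {p : PT y // Q p}) ^ F.card
        * (Fintype.card (PT y)) ^ (x - F.card) := by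
  classical
  rw [← Fintype.card_subtype]
  rw [Fintype.card_congr (Equiv.subtypePiEquivPi (p := fun i (b : PT y) => i ∈ F → Q b)),
    Fintype.card_pi]
  rw [← Finset.prod_mul_prod_compl F]
  have h1 : ∀ i ∈ F, Fintype.card {p : PT y // i ∈ F → Q p} = Fintype.card {p : PT y // Q p} :=
    fun i hi => Fintype.card_congr (Equiv.subtypeEquivRight (fun p => by simp [hi]))
  have h2 : ∀ i ∈ Fᶜ, Fintype.card {p : PT y // i ∈ F → Q p} = Fintype.card (PT y) := by
    intro i hi
    rw [Finset.mem_compl] at hi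
    exact Fintype.card_congr (Equiv.subtypeUnivEquiv (fun p hip => absurd hip hi))
  rw [Finset.prod_congr rfl h1, Finset.prod_congr rfl h2, Finset.prod_const, Finset.prod_const,
    Finset.card_compl, Fintype.card_fin]

open Classical in
lemma count_collision {x y : ℕ} (e e' : Fin x) (h : e ≠ e') :
    (univ.filter (fun ω : Fin x → PT y => ω e = ω e')).card
      ≤ Fintype.card (PT y) ^ (x - 1) := by
  classical
  have hx2 : 2 ≤ x := by
    have : Nontrivial (Fin x) := ⟨e, e', h⟩
    have := Fintype.one_lt_card (α := Fin x)
    exact (by simpa using this : 1 < x)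
  have hc : ({e, e'} : Finset (Fin x)).card = 2 := by
    rw [Finset.card_insert_of_notMem (by simpa using h), Finset.card_singleton]
  have hsub : univ.filter (fun ω : Fin x → PT y => ω e = ω e')
      ⊆ univ.biUnion (fun p : PT y => univ.filter
          (fun ω : Fin x → PT y => ∀ i ∈ ({e, e'} : Finset (Fin x)), ω i = p)) := by
    intro ω hω
    simp only [Finset.mem_filter, Finset.mem_univ, true_and] at hω
    refine Finset.mem_biUnion.2 ⟨ω e, Finset.mem_univ _, ?_⟩
    simp only [Finset.mem_filter, Finset.mem_univ, true_and, Finset.mem_insert,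
      Finset.mem_singleton]
    rintro i (rfl | rfl)
    · rfl
    · exact hω.symm
  calc (univ.filter (fun ω : Fin x → PT y => ω e = ω e')).card
      ≤ ∑ p : PT y, (univ.filter (fun ω : Fin x → PT y =>
          ∀ i ∈ ({e, e'} : Finset (Fin x)), ω i = p)).card :=
        le_trans (Finset.card_le_card hsub) (Finset.card_biUnion_le)
    _ = ∑ _p : PT y, Fintype.card (PT y) ^ (x - 2) := by
        refine Finset.sum_congr rfl fun p _ => ?_
        rw [count_forall ({e, e'} : Finset (Fin x)) (fun q => q = p), hc]
        simp [Fintype.card_subtype_eq]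
    _ = Fintype.card (PT y) * Fintype.card (PT y) ^ (x - 2) := by
        rw [Finset.sum_const, Finset.card_univ, smul_eq_mul]
    _ = Fintype.card (PT y) ^ (x - 1) := by
        rw [← pow_succ']
        congr 1
        omega

open Classical in
/-- A bad outcome either has a collision or has at least `s` edges inside some
vertex set of size `s ≥ 3`. -/
lemma bad_subset (x y : ℕ) :
    (univ.filter (BadGraph x y)) ⊆
      (univ.offDiag.biUnion fun q : Fin x × Fin x =>
          univ.filter (fun ω : Fin x → PT y => ω q.1 = ω q.2)) ∪
      ((univ : Finset (Finset (Fin y))).filter (fun S => 3 ≤ S.card)).biUnion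
        (fun S => univ.filter (fun ω : Fin x → PT y =>
          ∃ F ∈ Finset.powersetCard S.card (univ : Finset (Fin x)),
            ∀ e ∈ F, (ω e : Fin y × Fin y).1 ∈ S ∧ (ω e : Fin y × Fin y).2 ∈ S)) := by
  classical
  intro ω hω
  have hbad : BadGraph x y ω := (Finset.mem_filter.1 hω).2
  by_cases hcol : ∃ e e' : Fin x, e ≠ e' ∧ ω e = ω e'
  · refine Finset.mem_union_left _ ?_
    obtain ⟨e, e', hne, heq⟩ := hcol
    refine Finset.mem_biUnion.2 ⟨(e, e'), ?_, ?_⟩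
    · exact Finset.mem_offDiag.2 ⟨Finset.mem_univ _, Finset.mem_univ _, hne⟩
    · exact Finset.mem_filter.2 ⟨Finset.mem_univ _, heq⟩
  · have hinj : Function.Injective ω := by
      intro a b hab
      by_contra hne
      exact hcol ⟨a, b, hne, hab⟩
    rcases hbad with h | ⟨F₀, hF₀ne, hdeg⟩
    · exact absurd h hcol
    set deg : Fin y → ℕ := fun v => ∑ e ∈ F₀,
      ((if (ω e : Fin y × Fin y).1 = v then 1 else 0) +
       (if (ω e : Fin y × Fin y).2 = v then 1 else 0)) with hdegdef
    set S : Finset (Fin y) := univ.filter (fun v => deg v ≠ 0) with hSdef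
    have hend : ∀ e ∈ F₀, (ω e : Fin y × Fin y).1 ∈ S ∧ (ω e : Fin y × Fin y).2 ∈ S := by
      intro e he
      have key : ∀ v : Fin y, ((if (ω e : Fin y × Fin y).1 = v then 1 else 0) +
          (if (ω e : Fin y × Fin y).2 = v then 1 else 0) : ℕ) ≠ 0 → v ∈ S := by
        intro v hv
        refine Finset.mem_filter.2 ⟨Finset.mem_univ _, fun h0 => hv ?_⟩
        simp only [hdegdef] at h0
        exact Finset.sum_eq_zero_iff.1 h0 e he
      exact ⟨key _ (by simp), key _ (by simp)⟩
    have hsum : ∑ v : Fin y, deg v = 2 * F₀.card := by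
      simp only [hdegdef]
      rw [Finset.sum_comm]
      have hper : ∀ e ∈ F₀, ((∑ v : Fin y, ((if (ω e : Fin y × Fin y).1 = v then 1 else 0) +
          (if (ω e : Fin y × Fin y).2 = v then 1 else 0))) : ℕ) = 2 := by
        intro e _
        rw [Finset.sum_add_distrib,
          Finset.sum_ite_eq univ ((ω e : Fin y × Fin y).1) (fun _ => 1),
          Finset.sum_ite_eq univ ((ω e : Fin y × Fin y).2) (fun _ => 1)]
        simp
      rw [Finset.sum_congr rfl hper, Finset.sum_const, smul_eq_mul, mul_comm]
    have hS2 : ∀ v ∈ S, 2 ≤ deg v := by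
      intro v hv
      have := hdeg v
      have hne := (Finset.mem_filter.1 hv).2
      rcases this with h0 | h2
      · exact absurd h0 hne
      · exact h2
    have hScard : S.card ≤ F₀.card := by
      have h1 : 2 * S.card ≤ ∑ v ∈ S, deg v := by
        calc 2 * S.card = ∑ _v ∈ S, 2 := by rw [Finset.sum_const, smul_eq_mul, mul_comm]
          _ ≤ ∑ v ∈ S, deg v := Finset.sum_le_sum hS2
      have h2 : ∑ v ∈ S, deg v ≤ ∑ v : Fin y, deg v :=
        Finset.sum_le_sum_of_subset (Finset.subset_univ S)
      omega
    have hS3 : 3 ≤ S.card := by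
      by_contra h3
      push_neg at h3
      obtain ⟨e₀, he₀⟩ := hF₀ne
      set a : Fin y := (ω e₀ : Fin y × Fin y).1 with ha
      set b : Fin y := (ω e₀ : Fin y × Fin y).2 with hb
      have hab : a < b := (ω e₀).2
      have haS : a ∈ S := (hend e₀ he₀).1
      have hbS : b ∈ S := (hend e₀ he₀).2
      have habne : a ≠ b := ne_of_lt hab
      have hsub2 : ({a, b} : Finset (Fin y)) ⊆ S := by
        intro v hv
        rcases Finset.mem_insert.1 hv with rfl | hv
        · exact haS
        · rw [Finset.mem_singleton.1 hv]; exact hbS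
      have hcard2 : ({a, b} : Finset (Fin y)).card = 2 := by
        rw [Finset.card_insert_of_notMem (by simpa using habne), Finset.card_singleton]
      have hSeq : ({a, b} : Finset (Fin y)) = S :=
        Finset.eq_of_subset_of_card_le hsub2 (by omega)
      have hall : ∀ e ∈ F₀, ω e = ω e₀ := by
        intro e he
        have h1 : (ω e : Fin y × Fin y).1 ∈ ({a, b} : Finset (Fin y)) := by
          rw [hSeq]; exact (hend e he).1
        have h2 : (ω e : Fin y × Fin y).2 ∈ ({a, b} : Finset (Fin y)) := by
          rw [hSeq]; exact (hend e he).2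
        have hlt : (ω e : Fin y × Fin y).1 < (ω e : Fin y × Fin y).2 := (ω e).2
        simp only [Finset.mem_insert, Finset.mem_singleton] at h1 h2
        have he1 : (ω e : Fin y × Fin y).1 = a := by
          rcases h1 with h1 | h1
          · exact h1
          · exfalso
            rcases h2 with h2 | h2
            · rw [h1, h2] at hlt; exact (lt_asymm hab) hlt
            · rw [h1, h2] at hlt; exact absurd hlt (lt_irrefl b)
        have he2 : (ω e : Fin y × Fin y).2 = b := by
          rcases h2 with h2 | h2
          · exfalso; rw [he1, h2] at hlt; exact absurd hlt (lt_irrefl a)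
          · exact h2
        apply Subtype.ext
        apply Prod.ext
        · rw [he1]
        · rw [he2]
      have hF₀sub : F₀ ⊆ {e₀} := by
        intro e he
        exact Finset.mem_singleton.2 (hinj (hall e he))
      have hF₀eq : F₀ = {e₀} :=
        Finset.Subset.antisymm hF₀sub (Finset.singleton_subset_iff.2 he₀)
      rcases hdeg a with h0 | h2
      · exact (Finset.mem_filter.1 haS).2 (by simp only [hdegdef]; exact h0)
      · rw [hF₀eq, Finset.sum_singleton] at h2
        rw [if_pos rfl, if_neg (fun h => habne h.symm)] at h2
        omega
    obtain ⟨F, hFsub, hFcard⟩ := Finset.exists_subset_card_eq hScard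
    refine Finset.mem_union_right _ (Finset.mem_biUnion.2 ⟨S, ?_, ?_⟩)
    · exact Finset.mem_filter.2 ⟨Finset.mem_univ _, hS3⟩
    · refine Finset.mem_filter.2 ⟨Finset.mem_univ _, ⟨F, ?_, fun e he => hend e (hFsub he)⟩⟩
      exact Finset.mem_powersetCard.2 ⟨Finset.subset_univ _, hFcard⟩

open Classical in
lemma card_bad_le {x y : ℕ} (hx : 1 ≤ x) (hy : 2 ≤ y) :
    (univ.filter (BadGraph x y)).card ≤
      x * x * Fintype.card (PT y) ^ (x - 1) +
      ∑ j ∈ Finset.range (y + 1), (if 3 ≤ j then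
        y.choose j * (x.choose j * ((j ^ 2) ^ j * Fintype.card (PT y) ^ (x - j))) else 0) := by
  classical
  refine le_trans (Finset.card_le_card (bad_subset x y)) ?_
  refine le_trans (Finset.card_union_le _ _) (Nat.add_le_add ?_ ?_)
  · refine le_trans Finset.card_biUnion_le ?_
    refine le_trans (Finset.sum_le_sum (fun q hq =>
      count_collision q.1 q.2 (Finset.mem_offDiag.1 hq).2.2)) ?_
    rw [Finset.sum_const, smul_eq_mul]
    apply Nat.mul_le_mul_right
    rw [Finset.offDiag_card, Finset.card_univ, Fintype.card_fin]
    omega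
  · refine le_trans Finset.card_biUnion_le ?_
    have hper : ∀ S ∈ (univ : Finset (Finset (Fin y))).filter (fun S => 3 ≤ S.card),
        (univ.filter (fun ω : Fin x → PT y =>
          ∃ F ∈ Finset.powersetCard S.card (univ : Finset (Fin x)),
            ∀ e ∈ F, (ω e : Fin y × Fin y).1 ∈ S ∧ (ω e : Fin y × Fin y).2 ∈ S)).card
        ≤ x.choose S.card * ((S.card ^ 2) ^ S.card * Fintype.card (PT y) ^ (x - S.card)) := by
      intro S _
      have hsub : univ.filter (fun ω : Fin x → PT y =>
            ∃ F ∈ Finset.powersetCard S.card (univ : Finset (Fin x)),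
              ∀ e ∈ F, (ω e : Fin y × Fin y).1 ∈ S ∧ (ω e : Fin y × Fin y).2 ∈ S)
          ⊆ (Finset.powersetCard S.card (univ : Finset (Fin x))).biUnion (fun F =>
              univ.filter (fun ω : Fin x → PT y =>
                ∀ e ∈ F, (ω e : Fin y × Fin y).1 ∈ S ∧ (ω e : Fin y × Fin y).2 ∈ S)) := by
        intro ω hω
        obtain ⟨F, hF, hFall⟩ := (Finset.mem_filter.1 hω).2
        exact Finset.mem_biUnion.2 ⟨F, hF, Finset.mem_filter.2 ⟨Finset.mem_univ _, hFall⟩⟩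
      refine le_trans (Finset.card_le_card hsub) (le_trans Finset.card_biUnion_le ?_)
      have hbound : ∀ F ∈ Finset.powersetCard S.card (univ : Finset (Fin x)),
          (univ.filter (fun ω : Fin x → PT y =>
            ∀ e ∈ F, (ω e : Fin y × Fin y).1 ∈ S ∧ (ω e : Fin y × Fin y).2 ∈ S)).card
            ≤ (S.card ^ 2) ^ S.card * Fintype.card (PT y) ^ (x - S.card) := by
        intro F hF
        rw [count_forall F (fun p : PT y => (p : Fin y × Fin y).1 ∈ S ∧ (p : Fin y × Fin y).2 ∈ S)]
        rw [(Finset.mem_powersetCard.1 hF).2]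
        refine Nat.mul_le_mul_right _ (Nat.pow_le_pow_left ?_ _)
        have hinj : Function.Injective
            (fun p : {p : PT y // (p : Fin y × Fin y).1 ∈ S ∧ (p : Fin y × Fin y).2 ∈ S} =>
              ((⟨(p.1 : Fin y × Fin y).1, p.2.1⟩ : {v // v ∈ S}),
               (⟨(p.1 : Fin y × Fin y).2, p.2.2⟩ : {v // v ∈ S}))) := by
          intro p q hpq
          simp only [Prod.mk.injEq, Subtype.mk.injEq] at hpq
          exact Subtype.ext (Subtype.ext (Prod.ext hpq.1 hpq.2))
        have hle := Fintype.card_le_of_injective _ hinj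
        rw [Fintype.card_prod, Fintype.card_coe] at hle
        calc Fintype.card {p : PT y // (p : Fin y × Fin y).1 ∈ S ∧ (p : Fin y × Fin y).2 ∈ S}
            ≤ S.card * S.card := hle
          _ = S.card ^ 2 := (sq S.card).symm
      refine le_trans (Finset.sum_le_sum hbound) ?_
      rw [Finset.sum_const, smul_eq_mul, Finset.card_powersetCard, Finset.card_univ,
        Fintype.card_fin]
    refine le_trans (Finset.sum_le_sum hper) (le_of_eq ?_)
    rw [← Finset.powerset_univ, Finset.sum_filter, Finset.sum_powerset, Finset.card_univ,
      Fintype.card_fin]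
    refine Finset.sum_congr rfl fun j hj => ?_
    rw [Finset.sum_congr rfl (fun S hS => by
        rw [(Finset.mem_powersetCard.1 hS).2]),
      Finset.sum_const, smul_eq_mul, Finset.card_powersetCard, Finset.card_univ,
      Fintype.card_fin, mul_ite, mul_zero]

lemma choose_mul_pow_le (n j : ℕ) :
    (n.choose j : ℝ) * (j : ℝ) ^ j ≤ (Real.exp 1 * n) ^ j := by
  have h1 : (n.choose j : ℝ) ≤ (n : ℝ) ^ j / (j.factorial : ℝ) := Nat.choose_le_pow_div j n
  have h2 : (j : ℝ) ^ j / (j.factorial : ℝ) ≤ Real.exp j := by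
    refine le_trans ?_ (Real.sum_le_exp_of_nonneg (by positivity) (j + 1))
    exact Finset.single_le_sum (f := fun i => (j : ℝ) ^ i / (i.factorial : ℝ))
      (fun i _ => by positivity) (Finset.self_mem_range_succ j)
  have hexp : Real.exp (j : ℝ) = (Real.exp 1) ^ j := by
    rw [← Real.exp_nat_mul]; norm_num
  have hfac : (0:ℝ) < (j.factorial : ℝ) := by exact_mod_cast j.factorial_pos
  calc (n.choose j : ℝ) * (j:ℝ) ^ j
      ≤ ((n : ℝ) ^ j / (j.factorial : ℝ)) * (j:ℝ) ^ j := by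
        apply mul_le_mul_of_nonneg_right h1 (by positivity)
    _ = (n : ℝ) ^ j * ((j:ℝ) ^ j / (j.factorial : ℝ)) := by ring
    _ ≤ (n : ℝ) ^ j * Real.exp j := by
        apply mul_le_mul_of_nonneg_left h2 (by positivity)
    _ = (Real.exp 1 * n) ^ j := by rw [hexp, mul_pow]; ring

lemma term_bound {x y j : ℕ} (hx : 1 ≤ x) (hy : 2 ≤ y) (hj : 3 ≤ j) (hjx : j ≤ x) :
    ((y.choose j : ℝ) * ((x.choose j : ℝ) * (((j:ℝ) ^ 2) ^ j
        * ((Fintype.card (PT y) : ℝ)) ^ (x - j))))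
      / ((Fintype.card (PT y) : ℝ)) ^ x ≤ (30 * (x:ℝ) / (y:ℝ)) ^ j := by
  have hNpos : 0 < Fintype.card (PT y) := PTcard_pos hy
  set N := Fintype.card (PT y) with hNdef
  have hNR : (0:ℝ) < (N : ℝ) := by exact_mod_cast hNpos
  have hy0 : (0:ℝ) < (y:ℝ) := by exact_mod_cast (by omega : 0 < y)
  have hx0 : (0:ℝ) < (x:ℝ) := by exact_mod_cast hx
  have hsplit : (N:ℝ) ^ x = (N:ℝ) ^ (x - j) * (N:ℝ) ^ j := by
    rw [← pow_add]; congr 1; omega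
  have hLHS : ((y.choose j : ℝ) * ((x.choose j : ℝ) * (((j:ℝ) ^ 2) ^ j * ((N:ℝ)) ^ (x - j))))
      / ((N:ℝ)) ^ x
      = ((y.choose j : ℝ) * (x.choose j : ℝ) * (((j:ℝ)^2) ^ j)) / (N:ℝ) ^ j := by
    rw [hsplit]
    have h1 : ((N:ℝ)) ^ (x - j) ≠ 0 := by positivity
    have h2 : ((N:ℝ)) ^ j ≠ 0 := by positivity
    field_simp
  rw [hLHS, div_le_iff₀ (by positivity)]
  have hA := choose_mul_pow_le x j
  have hB := choose_mul_pow_le y j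
  have he2 : Real.exp 1 ^ 2 ≤ 7.5 := by
    nlinarith [Real.exp_one_lt_d9, Real.exp_pos 1]
  have hT : (y.choose j : ℝ) * (x.choose j : ℝ) * (((j:ℝ)^2) ^ j)
      ≤ (7.5 * (x:ℝ) * (y:ℝ)) ^ j := by
    have h1 : (y.choose j : ℝ) * (x.choose j : ℝ) * (((j:ℝ)^2) ^ j)
        = ((y.choose j : ℝ) * (j:ℝ)^j) * ((x.choose j : ℝ) * (j:ℝ)^j) := by ring
    rw [h1]
    calc ((y.choose j : ℝ) * (j:ℝ)^j) * ((x.choose j : ℝ) * (j:ℝ)^j)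
        ≤ (Real.exp 1 * y) ^ j * (Real.exp 1 * x) ^ j :=
          mul_le_mul hB hA (by positivity) (by positivity)
      _ = ((Real.exp 1 * y) * (Real.exp 1 * x)) ^ j := (mul_pow _ _ _).symm
      _ ≤ (7.5 * (x:ℝ) * (y:ℝ)) ^ j := by
          apply pow_le_pow_left₀ (by positivity)
          nlinarith [Real.exp_pos 1, hx0, hy0, he2,
            mul_le_mul_of_nonneg_right he2 (le_of_lt (mul_pos hx0 hy0))]
  have hW : ((30 * (x:ℝ) / (y:ℝ)) * ((y:ℝ)^2 / 4)) = 7.5 * (x:ℝ) * (y:ℝ) := by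
    field_simp
    ring
  have hy4 : (y:ℝ)^2 ≤ 4 * (N:ℝ) := by exact_mod_cast sq_le_four_PTcard hy
  have hNy : ((y:ℝ)^2 / 4) ^ j ≤ (N:ℝ) ^ j := by
    apply pow_le_pow_left₀ (by positivity)
    linarith
  calc (y.choose j : ℝ) * (x.choose j : ℝ) * (((j:ℝ)^2) ^ j)
      ≤ (7.5 * (x:ℝ) * (y:ℝ)) ^ j := hT
    _ = (30 * (x:ℝ) / (y:ℝ)) ^ j * ((y:ℝ)^2 / 4) ^ j := by rw [← mul_pow, hW]
    _ ≤ (30 * (x:ℝ) / (y:ℝ)) ^ j * (N:ℝ) ^ j := by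
        apply mul_le_mul_of_nonneg_left hNy (by positivity)

lemma geom_tail {r : ℝ} (hr0 : 0 ≤ r) (hr : r ≤ 1 / 2) (n : ℕ) :
    (∑ j ∈ Finset.range n, (if 3 ≤ j then r ^ j else 0)) ≤ 2 * r ^ 3 := by
  have hfil : (∑ j ∈ Finset.range n, (if 3 ≤ j then r ^ j else 0))
      = ∑ j ∈ Finset.Ico 3 n, r ^ j := by
    rw [← Finset.sum_filter]
    congr 1
    ext a
    simp only [Finset.mem_filter, Finset.mem_range, Finset.mem_Ico]
    omega
  rw [hfil, Finset.sum_Ico_eq_sum_range]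
  calc ∑ i ∈ Finset.range (n - 3), r ^ (3 + i)
      ≤ ∑ i ∈ Finset.range (n - 3), r ^ 3 * (1 / 2 : ℝ) ^ i := by
        refine Finset.sum_le_sum fun i _ => ?_
        rw [pow_add]
        exact mul_le_mul_of_nonneg_left (pow_le_pow_left₀ hr0 hr i) (by positivity)
    _ = r ^ 3 * ∑ i ∈ Finset.range (n - 3), (1 / 2 : ℝ) ^ i := by
        rw [Finset.mul_sum]
    _ ≤ r ^ 3 * 2 := by
        exact mul_le_mul_of_nonneg_left (sum_geometric_two_le _) (by positivity)
    _ = 2 * r ^ 3 := by ring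

open Classical in
lemma badProb_le_one (x y : ℕ) : badProb x y ≤ 1 := by
  rw [badProb]
  apply div_le_one_of_le₀
  · exact_mod_cast Finset.card_le_card (Finset.filter_subset _ _)
  · positivity

open Classical in
lemma badProb_le_main {x y : ℕ} (hx : 1 ≤ x) (hy : 2 ≤ y) :
    badProb x y ≤ 4 * (x:ℝ) ^ 2 / (y:ℝ) ^ 2
      + ∑ j ∈ Finset.range (y + 1), (if 3 ≤ j then (30 * (x:ℝ) / (y:ℝ)) ^ j else 0) := by
  classical
  have hNpos : 0 < Fintype.card (PT y) := PTcard_pos hy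
  set N := Fintype.card (PT y) with hNdef
  have hNR : (0:ℝ) < (N : ℝ) := by exact_mod_cast hNpos
  have hy0 : (0:ℝ) < (y:ℝ) := by exact_mod_cast (by omega : 0 < y)
  have hx0 : (0:ℝ) < (x:ℝ) := by exact_mod_cast hx
  have hcard : ((Finset.univ : Finset (Fin x → PT y)).card : ℝ) = (N:ℝ) ^ x := by
    rw [Finset.card_univ, Fintype.card_fun, Fintype.card_fin]
    push_cast
    rfl
  have hbp : badProb x y
      = ((Finset.univ.filter (BadGraph x y)).card : ℝ) / (N:ℝ) ^ x := by
    rw [badProb, hcard]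
  set Sn : ℕ := ∑ j ∈ Finset.range (y + 1), (if 3 ≤ j then
    y.choose j * (x.choose j * ((j ^ 2) ^ j * N ^ (x - j))) else 0) with hSndef
  have h1 : badProb x y ≤ (((x * x * N ^ (x - 1) + Sn : ℕ)) : ℝ) / (N:ℝ) ^ x := by
    rw [hbp]
    apply div_le_div_of_nonneg_right ?_ (by positivity)
    · exact_mod_cast card_bad_le hx hy
  have hsplitnum : (((x * x * N ^ (x - 1) + Sn : ℕ)) : ℝ)
      = (x:ℝ) * (x:ℝ) * (N:ℝ) ^ (x - 1) + (Sn : ℝ) := by push_cast; ring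
  rw [hsplitnum, add_div] at h1
  refine le_trans h1 (add_le_add ?_ ?_)
  · -- collision part
    have hpow : (N:ℝ) ^ x = (N:ℝ) ^ (x - 1) * (N:ℝ) := by
      rw [← pow_succ]; congr 1; omega
    rw [hpow, div_le_div_iff₀ (by positivity) (by positivity)]
    have hy4 : (y:ℝ) ^ 2 ≤ 4 * (N:ℝ) := by exact_mod_cast sq_le_four_PTcard hy
    nlinarith [mul_le_mul_of_nonneg_left hy4
      (by positivity : (0:ℝ) ≤ (x:ℝ) * (x:ℝ) * (N:ℝ) ^ (x - 1))]
  · -- cycle part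
    have hcast : (Sn : ℝ) = ∑ j ∈ Finset.range (y + 1), (if 3 ≤ j then
        ((y.choose j : ℝ) * ((x.choose j : ℝ) * (((j:ℝ) ^ 2) ^ j * (N:ℝ) ^ (x - j)))) else 0) := by
      rw [hSndef, Nat.cast_sum]
      refine Finset.sum_congr rfl fun j _ => ?_
      split_ifs
      · push_cast; ring
      · simp
    rw [hcast, Finset.sum_div]
    refine Finset.sum_le_sum fun j _ => ?_
    split_ifs with h3
    · rcases le_or_gt j x with hjx | hjx
      · exact term_bound hx hy h3 hjx
      · rw [Nat.choose_eq_zero_of_lt hjx]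
        have : (0:ℝ) ≤ (30 * (x:ℝ) / (y:ℝ)) ^ j := by positivity
        simpa using this
    · simp

/-- With `c = y/x`, the probability that the random multigraph is not simple or
contains a cycle is `O(1/c²)`; in particular choosing `c = Θ(√(1/ε))`, namely
`y ≥ √(4C/ε)·x`, makes this failure probability at most `ε/4`. -/
theorem random_sparse_graph_failure_prob :
    ∃ C : ℝ, 0 < C ∧
      ∀ (x y : ℕ) (c : ℝ), 1 ≤ x → 2 ≤ y → c = (y : ℝ) / (x : ℝ) →
        (badProb x y ≤ C / c ^ 2) ∧
        (∀ ε : ℝ, 0 < ε → ε ≤ 1 →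
          Real.sqrt (4 * C / ε) * (x : ℝ) ≤ (y : ℝ) →
          badProb x y ≤ ε / 4) := by
  refine ⟨3600, by norm_num, ?_⟩
  intro x y c hx hy hc
  have hx0 : (0:ℝ) < (x:ℝ) := by exact_mod_cast hx
  have hy0 : (0:ℝ) < (y:ℝ) := by exact_mod_cast (by omega : 0 < y)
  have hc0 : 0 < c := by rw [hc]; positivity
  have hmain : badProb x y ≤ 3600 / c ^ 2 := by
    rcases le_or_gt 60 c with h60 | h60
    · have hr1 : (30 * (x:ℝ) / (y:ℝ)) = 30 / c := by
        rw [hc]; field_simp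
      have hrhalf : 30 / c ≤ 1 / 2 := by
        rw [div_le_div_iff₀ hc0 (by norm_num)]; linarith
      have h1 := badProb_le_main hx hy
      rw [hr1] at h1
      have h2 := geom_tail (by positivity) hrhalf (y + 1)
      have h3 : 4 * (x:ℝ) ^ 2 / (y:ℝ) ^ 2 = 4 / c ^ 2 := by
        rw [hc]; field_simp
      have h4 : 2 * (30 / c) ^ 3 ≤ 3596 / c ^ 2 := by
        have he : 2 * (30 / c) ^ 3 = 54000 / c ^ 3 := by ring
        rw [he, div_le_div_iff₀ (by positivity) (by positivity)]
        nlinarith [hc0, h60, sq_nonneg c,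
          mul_nonneg (mul_nonneg hc0.le hc0.le) (by linarith : (0:ℝ) ≤ c - 60)]
      rw [h3] at h1
      calc badProb x y ≤ 4 / c ^ 2 + 2 * (30 / c) ^ 3 := by linarith
        _ ≤ 4 / c ^ 2 + 3596 / c ^ 2 := by linarith
        _ = 3600 / c ^ 2 := by ring
    · calc badProb x y ≤ 1 := badProb_le_one x y
        _ ≤ 3600 / c ^ 2 := by
            rw [le_div_iff₀ (by positivity)]
            nlinarith [h60, hc0]
  refine ⟨hmain, ?_⟩
  intro ε hε hε1 hsq
  have hCe : (0:ℝ) ≤ 4 * 3600 / ε := by positivity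
  have hcge : Real.sqrt (4 * 3600 / ε) ≤ c := by
    rw [hc, le_div_iff₀ hx0]
    exact hsq
  have hc2 : 4 * 3600 / ε ≤ c ^ 2 := by
    have hs := Real.sq_sqrt hCe
    nlinarith [Real.sqrt_nonneg (4 * 3600 / ε), hcge]
  calc badProb x y ≤ 3600 / c ^ 2 := hmain
    _ ≤ ε / 4 := by
        rw [div_le_div_iff₀ (by positivity) (by norm_num)]
        have hεc : ε * (4 * 3600 / ε) = 4 * 3600 := by field_simp
        nlinarith [mul_le_mul_of_nonneg_left hc2 (le_of_lt hε)]
end
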